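/- For an integer b ≥ 2 with prime factorization b = Π p_i^{α_i}, the sum over all compositions (t_1,...,t_r) of m of the product Π_{i=1}^r φ(b^{t_i}) equals b^m · C_b · (1 + C_b)^{m-1}, where C_b = Π (1 - 1/p_i) = φ(b)/b. -/

import Mathlib

-- totient of a power, rationally
lemma totient_pow_eq (b : ℕ) (hb : 2 ≤ b) (t : ℕ) (ht : 1 ≤ t) (C : ℚ)
    (hC : C = (b.totient : ℚ) / b) :
    (((b ^ t).totient : ℚ)) = (b : ℚ) ^ t * C := by
  have hb0 : (b : ℚ) ≠ 0 := by positivity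
  have h1 : ((b ^ t).totient : ℚ) = (b ^ t : ℕ) * ∏ p ∈ (b ^ t).primeFactors, (1 - ((p : ℚ))⁻¹) :=
    Nat.totient_eq_mul_prod_factors _
  have h2 : ((b).totient : ℚ) = (b : ℕ) * ∏ p ∈ b.primeFactors, (1 - ((p : ℚ))⁻¹) :=
    Nat.totient_eq_mul_prod_factors _
  have hpf : (b ^ t).primeFactors = b.primeFactors := Nat.primeFactors_pow b (by omega)
  rw [h1, hpf, hC, h2]
  push_cast
  field_simp

lemma list_prod_totient (b : ℕ) (hb : 2 ≤ b) (C : ℚ) (hC : C = (b.totient : ℚ) / b)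
    (l : List ℕ) (hl : ∀ t ∈ l, 1 ≤ t) :
    ((l.map fun t => Nat.totient (b ^ t)).prod : ℚ) = (b : ℚ) ^ l.sum * C ^ l.length := by
  induction l with
  | nil => simp
  | cons a l ih =>
    have ha : 1 ≤ a := hl a (by simp)
    have ihl := ih (fun t ht => hl t (by simp [ht]))
    simp only [List.map_cons, List.prod_cons, List.sum_cons, List.length_cons]
    push_cast
    push_cast at ihl
    rw [ihl, totient_pow_eq b hb a ha C hC]
    ring

lemma equiv_card_eq (m : ℕ) (hm : 0 < m) (d : CompositionAsSet m) :
    (compositionAsSetEquiv m d).card + 1 = d.length := by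
  classical
  have hinj : ∀ (i : Fin (m-1)), ((1 + (i:ℕ)) < m + 1) := by
    intro i; have := i.2; omega
  have hmem : ∀ i : Fin (m-1),
      i ∈ compositionAsSetEquiv m d ↔ ((⟨1 + i, hinj i⟩ : Fin (m+1)) ∈ d.boundaries) := by
    intro i; simp [compositionAsSetEquiv]
  have hcard : (compositionAsSetEquiv m d).card
      = (d.boundaries \ {0, Fin.last m}).card := by
    apply Finset.card_nbij (fun i : Fin (m-1) => (⟨1 + (i : ℕ), hinj i⟩ : Fin (m+1)))
    · intro i hi
      rw [Finset.mem_coe, hmem i] at hi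
      rw [Finset.mem_coe]
      simp only [Finset.mem_sdiff, Finset.mem_insert, Finset.mem_singleton]
      refine ⟨hi, ?_⟩
      have hi2 := i.2
      rw [not_or]
      constructor
      · intro h; rw [Fin.ext_iff] at h; simp at h
      · intro h; rw [Fin.ext_iff] at h; simp only [Fin.val_last] at h; omega
    · intro i _ j _ h
      rw [Fin.ext_iff] at h ⊢
      simpa using h
    · intro j hj
      simp only [Finset.coe_sdiff, Set.mem_diff, Finset.mem_coe, Finset.coe_insert,
        Set.mem_insert_iff, Finset.coe_singleton, Set.mem_singleton_iff, not_or] at hj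
      obtain ⟨hjb, hj0, hjl⟩ := hj
      have hj0' : (j : ℕ) ≠ 0 := by intro h; exact hj0 (Fin.ext (by simpa using h))
      have hjl' : (j : ℕ) ≠ m := by
        intro h; exact hjl (Fin.ext (by simpa [Fin.val_last] using h))
      have hjlt : (j : ℕ) < m + 1 := j.2
      refine ⟨⟨(j : ℕ) - 1, by omega⟩, ?_, ?_⟩
      · rw [Finset.mem_coe, hmem]
        convert hjb using 2
        simp; omega
      · rw [Fin.ext_iff]; simp; omega
  have hsub : ({0, Fin.last m} : Finset (Fin (m+1))) ⊆ d.boundaries := by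
    intro x hx
    simp only [Finset.mem_insert, Finset.mem_singleton] at hx
    rcases hx with rfl | rfl
    · exact d.zero_mem
    · exact d.getLast_mem
  have hne : (0 : Fin (m+1)) ≠ Fin.last m := by
    simp only [ne_eq, Fin.ext_iff, Fin.val_zero, Fin.val_last]
    omega
  have hc2 : ({0, Fin.last m} : Finset (Fin (m+1))).card = 2 := by
    rw [Finset.card_insert_of_notMem (by simpa using hne), Finset.card_singleton]
  have := Finset.card_sdiff_of_subset hsub
  have hb2 : 2 ≤ d.boundaries.card := by
    calc 2 = ({0, Fin.last m} : Finset (Fin (m+1))).card := hc2.symm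
    _ ≤ _ := Finset.card_le_card hsub
  have hlen := d.card_boundaries_eq_succ_length
  omega

lemma sum_pow_card {N : ℕ} (x : ℚ) :
    (∑ s : Finset (Fin N), x ^ s.card) = (1 + x) ^ N := by
  classical
  have := Finset.prod_add (fun _ : Fin N => x) (fun _ : Fin N => (1:ℚ)) Finset.univ
  simp only [Finset.prod_const, one_pow, mul_one, Finset.powerset_univ, Finset.card_univ,
    Fintype.card_fin] at this
  rw [add_comm x 1] at this
  exact this.symm

theorem sum_over_compositions_totient_base_b (b m : ℕ) (hb : 2 ≤ b) (hm : 0 < m)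
    (C : ℚ) (hC : C = (b.totient : ℚ) / b) :
    (∑ c : Composition m, ((c.blocks.map fun t => Nat.totient (b ^ t)).prod : ℚ)) =
      (b : ℚ) ^ m * C * (1 + C) ^ (m - 1) := by
  classical
  have hterm : ∀ c : Composition m,
      ((c.blocks.map fun t => Nat.totient (b ^ t)).prod : ℚ) = (b : ℚ) ^ m * C ^ c.length := by
    intro c
    rw [list_prod_totient b hb C hC c.blocks (fun t ht => c.one_le_blocks ht), c.blocks_sum]
  simp_rw [hterm]
  rw [← Finset.mul_sum]
  have hlen : ∀ c : Composition m,
      c.length = ((compositionAsSetEquiv m) ((compositionEquiv m) c)).card + 1 := by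
    intro c
    rw [equiv_card_eq m hm]
    exact (c.toCompositionAsSet_length).symm
  have : (∑ c : Composition m, C ^ c.length)
      = ∑ s : Finset (Fin (m - 1)), C ^ (s.card + 1) := by
    apply Fintype.sum_equiv ((compositionEquiv m).trans (compositionAsSetEquiv m))
    intro c
    rw [hlen c]
    rfl
  rw [this]
  simp_rw [pow_succ]
  rw [← Finset.sum_mul, sum_pow_card]
  ring
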